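/- Let A be a countable alphabet, P a probability distribution on A, and D a proper and almost surely complete dictionary over A. Let β be any finite string over A such that no string of D of length strictly less than |β| is a prefix of β. Then ∑_{α ∈ (D,β)} P(α)|α| ≥ P(β)|β|, where (D,β) = {α ∈ D : β is a prefix of α} and the sum is taken in [0,∞]. -/

import Mathlib

open scoped ENNReal
open Filter

/-- The probability of a finite string, obtained by extending the
distribution `P` multiplicatively: `P(a₁⋯aₙ) = ∏ᵢ P(aᵢ)`. -/
noncomputable def strProb {A : Type*} (P : PMF A) (l : List A) : ℝ≥0∞ :=
  (l.map fun a => P a).prod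

/-- A dictionary is a set of nonempty finite strings. -/
def IsDictionary {A : Type*} (D : Set (List A)) : Prop :=
  ∀ α ∈ D, α ≠ []

/-- A dictionary is proper if no string in it is a (proper) prefix of
another string in it. -/
def IsProper {A : Type*} (D : Set (List A)) : Prop :=
  ∀ α ∈ D, ∀ β ∈ D, α <+: β → α = β

/-- A dictionary is complete if every infinite sequence over `A` has a
prefix in it. -/
def IsCompleteDict {A : Type*} (D : Set (List A)) : Prop :=
  ∀ x : ℕ → A, ∃ α ∈ D, α = (List.range α.length).map x

/-- The probability that the length-`n` prefix of a random infinite sequence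
has some prefix belonging to `D`. -/
noncomputable def prefixProb {A : Type*} (P : PMF A) (D : Set (List A)) (n : ℕ) : ℝ≥0∞ :=
  ∑' γ : {γ : List A // γ.length = n ∧ ∃ β ∈ D, β <+: γ}, strProb P γ

/-- `D` is almost surely complete: under the infinite product measure `P^ℕ`,
the event that an infinite sequence has a prefix in `D` has probability `1`.
(By continuity from below, this probability is the limit, as `n → ∞`, of the
probability that the length-`n` prefix has a prefix in `D`.) -/
def IsASC {A : Type*} (P : PMF A) (D : Set (List A)) : Prop :=
  Tendsto (prefixProb P D) atTop (nhds 1)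

/-- `Tset D n` = strings of length `n` having no prefix in `D`. -/
def Tset {A : Type*} (D : Set (List A)) (n : ℕ) : Set (List A) :=
  {α | α.length = n ∧ ∀ β ∈ D, ¬ β <+: α}

/-- `Dperp D n = {α ∈ D : |α| = n} ∪ Tₙ`. -/
def Dperp {A : Type*} (D : Set (List A)) (n : ℕ) : Set (List A) :=
  {α ∈ D | α.length = n} ∪ Tset D n

/-- `Dn D n = {α ∈ D : |α| < n} ∪ Dₙ^⊥`. -/
def Dn {A : Type*} (D : Set (List A)) (n : ℕ) : Set (List A) :=
  {α ∈ D | α.length < n} ∪ Dperp D n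

/-- The one-letter extensions `αA = {αa : a ∈ A}` of a string `α`. -/
def oneExt {A : Type*} (α : List A) : Set (List A) :=
  {l | ∃ a : A, l = α ++ [a]}

/-- The extension `D[α] = (D \ {α}) ∪ αA` of a dictionary at `α`. -/
def extendDict {A : Type*} (D : Set (List A)) (α : List A) : Set (List A) :=
  (D \ {α}) ∪ oneExt α

/-- The nonnegative entropy contribution `-p log₂ p ∈ [0,∞]` of a
probability value `p`. -/
noncomputable def entTerm (p : ℝ≥0∞) : ℝ≥0∞ :=
  ENNReal.ofReal (-(p.toReal * Real.logb 2 p.toReal))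

/-- The entropy `H(E) = -∑_{α∈E} P(α) log₂ P(α)` of a dictionary, in `[0,∞]`. -/
noncomputable def dictEntropy {A : Type*} (P : PMF A) (E : Set (List A)) : ℝ≥0∞ :=
  ∑' α : E, entTerm (strProb P α)

/-- The average length `l̄(E) = ∑_{α∈E} P(α)|α|` of a dictionary, in `[0,∞]`. -/
noncomputable def avgLen {A : Type*} (P : PMF A) (E : Set (List A)) : ℝ≥0∞ :=
  ∑' α : E, strProb P α * (α : List A).length

/-- The source entropy `H(P) = -∑_{a∈A} P(a) log₂ P(a)`, in `[0,∞]`. -/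
noncomputable def srcEntropy {A : Type*} (P : PMF A) : ℝ≥0∞ :=
  ∑' a : A, entTerm (P a)


section Aux
variable {A : Type*}

variable {A : Type*}

lemma strProb_append (P : PMF A) (l₁ l₂ : List A) :
    strProb P (l₁ ++ l₂) = strProb P l₁ * strProb P l₂ := by
  simp [strProb]

/-- Length-`n` extensions of `α`. -/
def Eset (α : List A) (n : ℕ) : Set (List A) := {γ | γ.length = n ∧ α <+: γ}

lemma tsum_strProb_length (P : PMF A) (k : ℕ) :
    ∑' δ : {δ : List A // δ.length = k}, strProb P (δ : List A) = 1 := by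
  induction k with
  | zero =>
    letI : Unique {δ : List A // δ.length = 0} :=
      ⟨⟨⟨[], rfl⟩⟩, by rintro ⟨δ, h⟩; exact Subtype.ext (List.length_eq_zero_iff.mp h)⟩
    rw [tsum_eq_single default fun b hb => absurd (Unique.eq_default b) hb]
    show strProb P ([] : List A) = 1
    simp [strProb]
  | succ k ih =>
    let e : A × {δ : List A // δ.length = k} ≃ {δ : List A // δ.length = k + 1} :=
      Equiv.ofBijective (fun p => ⟨p.1 :: p.2.1, by simp [p.2.2]⟩)
        ⟨by rintro ⟨a, δ, hδ⟩ ⟨b, ε, hε⟩ h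
            simp only [Subtype.mk.injEq, List.cons.injEq] at h
            simp [Prod.ext_iff, Subtype.ext_iff, h.1, h.2],
         by rintro ⟨(_ | ⟨a, t⟩), hγ⟩
            · simp at hγ
            · exact ⟨(a, ⟨t, by simpa using hγ⟩), rfl⟩⟩
    rw [← e.tsum_eq]
    have : ∀ p : A × {δ : List A // δ.length = k},
        strProb P ((e p : {δ : List A // δ.length = k + 1}) : List A)
          = P p.1 * strProb P (p.2 : List A) := by
      intro p
      show strProb P (p.1 :: p.2.1) = _
      simp [strProb]
    rw [tsum_congr this, ENNReal.tsum_prod']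
    simp only [ENNReal.tsum_mul_left]
    have : ∀ a : A, P a * ∑' δ : {δ : List A // δ.length = k}, strProb P (δ : List A)
        = P a := by intro a; rw [ih, mul_one]
    rw [tsum_congr this, P.tsum_coe]

lemma tsum_strProb_Eset (P : PMF A) (α : List A) {n : ℕ} (hn : α.length ≤ n) :
    ∑' γ : (Eset α n), strProb P (γ : List A) = strProb P α := by
  let e : {δ : List A // δ.length = n - α.length} ≃ (Eset α n) :=
    Equiv.ofBijective
      (fun δ => ⟨α ++ δ.1, by simp [Eset, δ.2]; omega, List.prefix_append _ _⟩)
      ⟨by rintro ⟨δ, hδ⟩ ⟨ε, hε⟩ h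
          simp only [Subtype.mk.injEq, List.append_cancel_left_eq] at h
          exact Subtype.ext (List.append_cancel_left (congrArg Subtype.val h)),
       by rintro ⟨γ, hlen, ⟨δ, rfl⟩⟩
          refine ⟨⟨δ, ?_⟩, rfl⟩
          simp at hlen; omega⟩
  rw [← e.tsum_eq]
  have : ∀ δ : {δ : List A // δ.length = n - α.length},
      strProb P ((e δ : (Eset α n)) : List A) = strProb P α * strProb P (δ : List A) := by
    intro δ
    show strProb P (α ++ δ.1) = _
    rw [strProb_append]
  rw [tsum_congr this, ENNReal.tsum_mul_left, tsum_strProb_length, mul_one]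

lemma tsum_indicator_Eset (P : PMF A) (α : List A) {n : ℕ} (hn : α.length ≤ n) :
    ∑' γ : List A, (Eset α n).indicator (strProb P) γ = strProb P α := by
  rw [← tsum_subtype]; exact tsum_strProb_Eset P α hn

lemma mem_Eset {α : List A} {n : ℕ} {γ : List A} :
    γ ∈ Eset α n ↔ γ.length = n ∧ α <+: γ := Iff.rfl

lemma mem_Tset {D : Set (List A)} {n : ℕ} {γ : List A} :
    γ ∈ Tset D n ↔ γ.length = n ∧ ∀ β ∈ D, ¬ β <+: γ := Iff.rfl


end Aux

/-- If `D` is proper and almost surely complete and no string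
of `D` of length `< |β|` is a prefix of `β`, then
`∑_{α ∈ (D,β)} P(α)|α| ≥ P(β)|β|`. -/
theorem strProb_mul_length_le_avgLen_prefixSet {A : Type*} [Countable A]
    (P : PMF A) (D : Set (List A)) (hdict : IsDictionary D)
    (hprop : IsProper D) (hasc : IsASC P D) (β : List A)
    (hβ : ∀ γ ∈ D, γ.length < β.length → ¬ γ <+: β) :
    strProb P β * β.length ≤ avgLen P {α ∈ D | β <+: α} := by
  classical
  set S : Set (List A) := {α ∈ D | β <+: α} with hS
  set f : List A → ℝ≥0∞ := strProb P with hfdef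
  have key : strProb P β ≤ ∑' α : S, f (α : List A) := by
    refine ENNReal.le_of_forall_pos_le_add fun ε hε _ => ?_
    have hev : ∀ᶠ n in atTop, (1 : ℝ≥0∞) - ε ≤ prefixProb P D n :=
      hasc.eventually (eventually_ge_nhds (ENNReal.sub_lt_self ENNReal.one_ne_top
        one_ne_zero (ENNReal.coe_ne_zero.mpr hε.ne')))
    obtain ⟨n, hn1, hn2⟩ := (hev.and (eventually_ge_atTop β.length)).exists
    set H : Set (List A) := {γ | ∃ δ ∈ D, δ <+: γ} with hH
    -- the total mass at level n is 1
    have htot : ∑' γ : List A, ({γ : List A | γ.length = n}).indicator f γ = 1 := by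
      rw [← tsum_subtype]
      exact tsum_strProb_length P n
    -- mass of Tset is at most ε
    have hTmass_le : ∑' γ : List A, (Tset D n).indicator f γ ≤ ε := by
      have hdecomp : ∀ γ : List A, ({γ : List A | γ.length = n}).indicator f γ
          = ({γ : List A | γ.length = n ∧ ∃ δ ∈ D, δ <+: γ}).indicator f γ
            + (Tset D n).indicator f γ := by
        intro γ
        by_cases hlen : γ.length = n
        · have hm1 : γ ∈ {γ : List A | γ.length = n} := hlen
          by_cases hpre : ∃ δ ∈ D, δ <+: γ
          · have hm2 : γ ∈ {γ : List A | γ.length = n ∧ ∃ δ ∈ D, δ <+: γ} := ⟨hlen, hpre⟩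
            have hm3 : γ ∉ Tset D n := fun h => by
              obtain ⟨δ, hδD, hδγ⟩ := hpre
              exact (mem_Tset.mp h).2 δ hδD hδγ
            rw [Set.indicator_of_mem hm1, Set.indicator_of_mem hm2,
              Set.indicator_of_notMem hm3, add_zero]
          · have hm2 : γ ∉ {γ : List A | γ.length = n ∧ ∃ δ ∈ D, δ <+: γ} :=
              fun h => hpre h.2
            have hm3 : γ ∈ Tset D n :=
              mem_Tset.mpr ⟨hlen, fun δ hδ hp => hpre ⟨δ, hδ, hp⟩⟩
            rw [Set.indicator_of_mem hm1, Set.indicator_of_notMem hm2,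
              Set.indicator_of_mem hm3, zero_add]
        · have hm1 : γ ∉ {γ : List A | γ.length = n} := hlen
          have hm2 : γ ∉ {γ : List A | γ.length = n ∧ ∃ δ ∈ D, δ <+: γ} :=
            fun h => hlen h.1
          have hm3 : γ ∉ Tset D n := fun h => hlen (mem_Tset.mp h).1
          rw [Set.indicator_of_notMem hm1, Set.indicator_of_notMem hm2,
            Set.indicator_of_notMem hm3, add_zero]
      have hsum : prefixProb P D n + ∑' γ : List A, (Tset D n).indicator f γ = 1 := by
        rw [← htot, tsum_congr hdecomp, ENNReal.tsum_add]
        congr 1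
        exact tsum_subtype {γ : List A | γ.length = n ∧ ∃ δ ∈ D, δ <+: γ} f
      have hpfin : prefixProb P D n ≠ ∞ := by
        intro h
        rw [h] at hsum
        simp at hsum
      have : prefixProb P D n + ∑' γ : List A, (Tset D n).indicator f γ
          ≤ prefixProb P D n + ε := by
        rw [hsum]
        calc (1 : ℝ≥0∞) ≤ 1 - ε + ε := le_tsub_add
          _ ≤ prefixProb P D n + ε := add_le_add_left hn1 _
      exact (ENNReal.add_le_add_iff_left hpfin).mp this
    -- mass of the covered part is at most the dictionary sum
    have hcover : ∀ γ : List A, ((Eset β n ∩ H)).indicator f γ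
        ≤ ∑' α : S, (Eset (α : List A) n).indicator f γ := by
      intro γ
      by_cases hγ : γ ∈ Eset β n ∩ H
      · obtain ⟨⟨hlen, hβγ⟩, δ, hδD, hδγ⟩ := id hγ
        have hα : ∃ α : S, γ ∈ Eset (α : List A) n := by
          rcases List.prefix_or_prefix_of_prefix hδγ hβγ with h | h
          · have hle : β.length ≤ δ.length := by
              by_contra hlt
              push_neg at hlt
              exact hβ δ hδD hlt h
            have heq : δ = β := h.eq_of_length_le hle
            exact ⟨⟨β, heq ▸ hδD, List.prefix_refl _⟩, ⟨hlen, hβγ⟩⟩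
          · exact ⟨⟨δ, hδD, h⟩, ⟨hlen, hδγ⟩⟩
        obtain ⟨α, hαγ⟩ := hα
        rw [Set.indicator_of_mem hγ, ← Set.indicator_of_mem hαγ f]
        exact ENNReal.le_tsum α
      · rw [Set.indicator_of_notMem hγ]
        exact zero_le
    have hfirst : ∑' γ : List A, (Eset β n ∩ H).indicator f γ ≤ ∑' α : S, f (α : List A) := by
      calc ∑' γ : List A, (Eset β n ∩ H).indicator f γ
          ≤ ∑' γ : List A, ∑' α : S, (Eset (α : List A) n).indicator f γ :=
            ENNReal.tsum_le_tsum hcover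
        _ = ∑' α : S, ∑' γ : List A, (Eset (α : List A) n).indicator f γ := ENNReal.tsum_comm
        _ ≤ ∑' α : S, f (α : List A) := by
            refine ENNReal.tsum_le_tsum fun α => ?_
            by_cases hl : (α : List A).length ≤ n
            · exact le_of_eq (tsum_indicator_Eset P _ hl)
            · have hempty : Eset (α : List A) n = ∅ := by
                ext γ
                simp only [Eset, Set.mem_setOf_eq, Set.mem_empty_iff_false, iff_false, not_and]
                intro h1 h2
                exact hl (h2.length_le.trans_eq h1)
              simp [hempty]
    -- split and conclude
    have hsplit : ∀ γ, (Eset β n).indicator f γ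
        ≤ (Eset β n ∩ H).indicator f γ + (Tset D n).indicator f γ := by
      intro γ
      by_cases hγ : γ ∈ Eset β n
      · by_cases hHγ : γ ∈ H
        · rw [Set.indicator_of_mem hγ, Set.indicator_of_mem (Set.mem_inter hγ hHγ)]
          exact le_self_add
        · have hT : γ ∈ Tset D n := mem_Tset.mpr ⟨(mem_Eset.mp hγ).1, fun δ hδ hp => hHγ ⟨δ, hδ, hp⟩⟩
          rw [Set.indicator_of_mem hγ, Set.indicator_of_mem hT]
          exact le_add_self
      · rw [Set.indicator_of_notMem hγ]
        exact zero_le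
    calc strProb P β = ∑' γ : List A, (Eset β n).indicator f γ :=
          (tsum_indicator_Eset P β hn2).symm
      _ ≤ ∑' γ : List A, ((Eset β n ∩ H).indicator f γ + (Tset D n).indicator f γ) :=
          ENNReal.tsum_le_tsum hsplit
      _ = (∑' γ : List A, (Eset β n ∩ H).indicator f γ)
            + ∑' γ : List A, (Tset D n).indicator f γ := ENNReal.tsum_add
      _ ≤ (∑' α : S, f (α : List A)) + ε := add_le_add hfirst hTmass_le
  calc strProb P β * β.length ≤ (∑' α : S, f (α : List A)) * β.length :=
        mul_le_mul_left key _
    _ = ∑' α : S, f (α : List A) * β.length := (ENNReal.tsum_mul_right).symm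
    _ ≤ ∑' α : S, f (α : List A) * (α : List A).length :=
        ENNReal.tsum_le_tsum fun α =>
          mul_le_mul_right (Nat.cast_le.mpr α.2.2.length_le) _
    _ = avgLen P S := rfl
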